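/- For every r ≥ 2, any unary r-uniform family F of partial functions from a finite set X to {0,1} such that every total function f : X → {0,1} extends some member of F has |F| ≥ 2^r + 1. (That is, m̃'_2(r) ≥ 2^r + 1.) -/

import Mathlib

open Finset

/-- The domain of a partial map `φ : X ⇀ Bool` (encoded as `X → Option Bool`). -/
def pdom {X : Type*} [Fintype X] (φ : X → Option Bool) : Finset X :=
  Finset.univ.filter (fun x => (φ x).isSome)

/-- A total function `f : X → Bool` extends the partial map `φ`. -/
def PExtends {X : Type*} (f : X → Bool) (φ : X → Option Bool) : Prop :=
  ∀ x b, φ x = some b → f x = b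

instance {X : Type*} [Fintype X] (f : X → Bool) : DecidablePred (PExtends f) :=
  fun φ => inferInstanceAs (Decidable (∀ x b, φ x = some b → f x = b))

/-- The weight of a family of partial maps: `∑ 2^{-|dom φ|}`. -/
noncomputable def weight {X : Type*} [Fintype X] (F : Finset (X → Option Bool)) : ℝ :=
  ∑ φ ∈ F, (1/2 : ℝ) ^ (pdom φ).card

/-- `F` is a 2-fold cover of the hypergraph `H`. -/
def IsCover {X : Type*} [Fintype X] (H : Finset (Finset X)) (F : Finset (X → Option Bool)) : Prop :=
  (∀ φ ∈ F, pdom φ ∈ H) ∧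
  (∀ φ ∈ F, ∀ ψ ∈ F, φ ≠ ψ → pdom φ = pdom ψ → ∀ x ∈ pdom φ, φ x ≠ ψ x)

section Aux

variable {X : Type*} [Fintype X] [DecidableEq X]

lemma mem_pdom_iff (φ : X → Option Bool) (x : X) : x ∈ pdom φ ↔ (φ x).isSome := by
  simp [pdom]

/-- The sign of a function with respect to a domain `D` and reference coloring `c`. -/
def sgn (D : Finset X) (c : X → Bool) (f : X → Bool) : ℤ :=
  ∏ x ∈ D, (if f x = c x then (1 : ℤ) else -1)

lemma sgn_flip (D : Finset X) (c : X → Bool) {x₀ : X} (hx₀ : x₀ ∈ D) (f : X → Bool) :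
    sgn D c (Function.update f x₀ (!f x₀)) = - sgn D c f := by
  unfold sgn
  rw [← Finset.mul_prod_erase D _ hx₀,
      ← Finset.mul_prod_erase D (fun x => if f x = c x then (1 : ℤ) else -1) hx₀]
  have h1 : ∏ x ∈ D.erase x₀, (if Function.update f x₀ (!f x₀) x = c x then (1 : ℤ) else -1)
      = ∏ x ∈ D.erase x₀, (if f x = c x then (1 : ℤ) else -1) :=
    Finset.prod_congr rfl fun x hx => by
      rw [Function.update_of_ne (Finset.ne_of_mem_erase hx)]
  rw [h1, Function.update_self]
  have h2 : (if (!f x₀) = c x₀ then (1 : ℤ) else -1)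
      = -(if f x₀ = c x₀ then (1 : ℤ) else -1) := by
    cases hf : f x₀ <;> cases hc : c x₀ <;> simp
  rw [h2]; ring

lemma sum_sgn_zero (s : Finset (X → Bool)) (D : Finset X) (c : X → Bool) {x₀ : X}
    (hx₀ : x₀ ∈ D) (hclosed : ∀ f ∈ s, Function.update f x₀ (!f x₀) ∈ s) :
    ∑ f ∈ s, sgn D c f = 0 := by
  refine Finset.sum_involution (fun f _ => Function.update f x₀ (!f x₀))
    (fun f _ => by rw [sgn_flip D c hx₀ f]; ring)
    (fun f _ _ heq => by have := congrFun heq x₀; simp at this)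
    hclosed
    (fun f _ => ?_)
  show Function.update _ x₀ (!(Function.update f x₀ (!f x₀) x₀)) = f
  rw [Function.update_self, Bool.not_not, Function.update_idem, Function.update_eq_self]

lemma cardE (φ : X → Option Bool) :
    (Finset.univ.filter (fun f : X → Bool => PExtends f φ)).card
      = 2 ^ (Fintype.card X - (pdom φ).card) := by
  classical
  have key : (Finset.univ.filter (fun f : X → Bool => PExtends f φ)).card
      = (Finset.univ : Finset (↥((pdom φ)ᶜ) → Bool)).card := by
    refine Finset.card_bij' (fun f _ => fun x => f x.1)
      (fun g _ => fun x => if hx : x ∈ pdom φ then (φ x).getD false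
        else g ⟨x, Finset.mem_compl.mpr hx⟩) ?_ ?_ ?_ ?_
    · intro f _; exact Finset.mem_univ _
    · intro g _
      simp only [Finset.mem_filter, Finset.mem_univ, true_and]
      intro x b hb
      have hx : x ∈ pdom φ := by rw [mem_pdom_iff, hb]; rfl
      simp [hx, hb]
    · intro f hf
      simp only [Finset.mem_filter, Finset.mem_univ, true_and] at hf
      funext x
      by_cases hx : x ∈ pdom φ
      · rw [mem_pdom_iff] at hx
        obtain ⟨b, hb⟩ := Option.isSome_iff_exists.mp hx
        simp [mem_pdom_iff, hx, hb, hf x b hb]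
      · simp [hx]
    · intro g _
      funext x
      have hx : (x : X) ∉ pdom φ := Finset.mem_compl.mp x.2
      simp [hx]
  rw [key, Finset.card_univ, Fintype.card_fun, Fintype.card_coe, Finset.card_compl,
    Fintype.card_bool]

end Aux

theorem stmt_5 (r : ℕ) (hr : 2 ≤ r) {X : Type*} [Fintype X]
    (F : Finset (X → Option Bool))
    (huniform : ∀ φ ∈ F, (pdom φ).card = r)
    (hunary : ∀ φ ∈ F, ∀ ψ ∈ F, pdom φ = pdom ψ → φ = ψ)
    (h : ∀ f : X → Bool, ∃ φ ∈ F, PExtends f φ) :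
    2 ^ r + 1 ≤ F.card := by
  classical
  by_contra hlt
  push_neg at hlt
  have hle : F.card ≤ 2 ^ r := Nat.lt_succ_iff.mp hlt
  obtain ⟨φ₀, hφ₀F, _⟩ := h (fun _ => false)
  set n := Fintype.card X with hn
  set D := pdom φ₀ with hD
  have hDcard : D.card = r := huniform φ₀ hφ₀F
  have hrn : r ≤ n := hDcard ▸ (Finset.card_le_univ D).trans_eq Finset.card_univ
  -- counting: the cover must be exact
  have hswap : ∑ φ ∈ F, (Finset.univ.filter (fun f : X → Bool => PExtends f φ)).card
      = ∑ f : X → Bool, (F.filter (fun φ => PExtends f φ)).card := by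
    simp only [Finset.card_filter]
    rw [Finset.sum_comm]
  have htot : ∑ φ ∈ F, (Finset.univ.filter (fun f : X → Bool => PExtends f φ)).card
      = F.card * 2 ^ (n - r) := by
    rw [Finset.sum_congr rfl fun φ hφ => by rw [cardE φ, huniform φ hφ]]
    rw [Finset.sum_const, smul_eq_mul]
  have hub : ∑ f : X → Bool, (F.filter (fun φ => PExtends f φ)).card ≤ 2 ^ n := by
    rw [← hswap, htot]
    calc F.card * 2 ^ (n - r) ≤ 2 ^ r * 2 ^ (n - r) := Nat.mul_le_mul_right _ hle
      _ = 2 ^ n := by rw [← pow_add]; congr 1; omega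
  have hone : ∀ f : X → Bool, 1 ≤ (F.filter (fun φ => PExtends f φ)).card := by
    intro f
    obtain ⟨φ, hφ, hext⟩ := h f
    exact Finset.card_pos.mpr ⟨φ, Finset.mem_filter.mpr ⟨hφ, hext⟩⟩
  have hcardfun : Fintype.card (X → Bool) = 2 ^ n := by
    rw [Fintype.card_fun, Fintype.card_bool]
  have hlb : (2 : ℕ) ^ n ≤ ∑ f : X → Bool, (F.filter (fun φ => PExtends f φ)).card := by
    calc (2 : ℕ) ^ n = ∑ _f : X → Bool, 1 := by
          rw [Finset.sum_const, smul_eq_mul, mul_one, Finset.card_univ, hcardfun]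
      _ ≤ _ := Finset.sum_le_sum fun f _ => hone f
  have hexact : ∀ f : X → Bool, (F.filter (fun φ => PExtends f φ)).card = 1 := by
    have heq : ∑ _f : X → Bool, 1 = ∑ f : X → Bool, (F.filter (fun φ => PExtends f φ)).card := by
      rw [Finset.sum_const, smul_eq_mul, mul_one, Finset.card_univ, hcardfun]
      omega
    intro f
    exact ((Finset.sum_eq_sum_iff_of_le fun i _ => hone i).mp heq f (Finset.mem_univ f)).symm
  -- the sign argument
  set c : X → Bool := fun x => (φ₀ x).getD false with hc
  have hx₀ : ∃ x₀, x₀ ∈ D := Finset.card_pos.mp (by omega)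
  obtain ⟨x₀, hx₀D⟩ := hx₀
  -- total sum of signs over the whole cube is zero
  have hzero : ∑ f : X → Bool, sgn D c f = 0 :=
    sum_sgn_zero Finset.univ D c hx₀D (fun f _ => Finset.mem_univ _)
  -- rewrite as a double sum using exactness
  have hdouble : ∑ f : X → Bool, sgn D c f
      = ∑ φ ∈ F, ∑ f ∈ Finset.univ.filter (fun f : X → Bool => PExtends f φ), sgn D c f := by
    simp only [Finset.sum_filter]
    rw [Finset.sum_comm]
    apply Finset.sum_congr rfl
    intro f _
    have : ∑ φ ∈ F, (if PExtends f φ then sgn D c f else 0)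
        = (F.filter (fun φ => PExtends f φ)).card • sgn D c f := by
      rw [← Finset.sum_filter, Finset.sum_const]
    rw [this, hexact f, one_smul]
  -- each term with φ ≠ φ₀ vanishes; the term with φ₀ is positive
  have hterm : ∀ φ ∈ F, φ ≠ φ₀ →
      ∑ f ∈ Finset.univ.filter (fun f : X → Bool => PExtends f φ), sgn D c f = 0 := by
    intro φ hφ hne
    have hdne : ¬ D ⊆ pdom φ := by
      intro hsub
      have : D = pdom φ :=
        Finset.eq_of_subset_of_card_le hsub (by rw [huniform φ hφ, hDcard])
      exact hne (hunary φ hφ φ₀ hφ₀F (by rw [← this]))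
    obtain ⟨y, hyD, hyφ⟩ := Finset.not_subset.mp hdne
    apply sum_sgn_zero _ D c hyD
    intro f hf
    simp only [Finset.mem_filter, Finset.mem_univ, true_and] at hf ⊢
    intro x b hb
    have hx : x ∈ pdom φ := by rw [mem_pdom_iff, hb]; rfl
    have hxy : x ≠ y := fun hxy => hyφ (hxy ▸ hx)
    rw [Function.update_of_ne hxy]
    exact hf x b hb
  have hterm₀ : ∑ f ∈ Finset.univ.filter (fun f : X → Bool => PExtends f φ₀), sgn D c f
      = (Finset.univ.filter (fun f : X → Bool => PExtends f φ₀)).card := by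
    rw [Finset.card_eq_sum_ones, Nat.cast_sum]
    apply Finset.sum_congr rfl
    intro f hf
    simp only [Finset.mem_filter, Finset.mem_univ, true_and] at hf
    unfold sgn
    rw [Finset.prod_eq_one]
    · simp
    intro x hx
    rw [hD, mem_pdom_iff] at hx
    obtain ⟨b, hb⟩ := Option.isSome_iff_exists.mp hx
    simp [hf x b hb, hc, hb]
  have hsum : ∑ φ ∈ F, ∑ f ∈ Finset.univ.filter (fun f : X → Bool => PExtends f φ), sgn D c f
      = (Finset.univ.filter (fun f : X → Bool => PExtends f φ₀)).card := by
    rw [Finset.sum_eq_single φ₀ (fun φ hφ hne => hterm φ hφ hne) (fun hne => absurd hφ₀F hne)]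
    exact hterm₀
  rw [hdouble, hsum] at hzero
  have hpos : 0 < (Finset.univ.filter (fun f : X → Bool => PExtends f φ₀)).card := by
    rw [cardE φ₀]
    exact Nat.two_pow_pos _
  rw [Nat.cast_eq_zero] at hzero
  omega
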